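/- Let I be a monomial ideal, and let J and K be monomial ideals such that G(I) is the disjoint union of G(J) and G(K). If both J and K have linear minimal free resolutions, then I = J + K is a Betti splitting. -/

import Mathlib

set_option linter.unusedSectionVars false

open MvPolynomial

variable (k : Type*) [Field k] (σ : Type*) [Fintype σ] [DecidableEq σ] [LinearOrder σ]

/-- The Koszul differential on chains `c : Finset σ → R`. -/
noncomputable def koszulD :
    (Finset σ → MvPolynomial σ k) →ₗ[k] (Finset σ → MvPolynomial σ k) where
  toFun c := fun S => ∑ t ∈ Sᶜ,
    (-1 : MvPolynomial σ k) ^ (S.filter (fun s => s < t)).card * (X t * c (insert t S))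
  map_add' c d := by
    funext S
    simp [mul_add, Finset.sum_add_distrib]
  map_smul' a c := by
    funext S
    simp [Finset.smul_sum, mul_smul_comm]

/-- The multidegree-`j` piece of the `i`-th term of the Koszul complex tensored with
the ideal `I`: functions assigning to each `i`-element subset `S` of the variables an
element of `I` that is homogeneous of multidegree `j - deg S`. -/
noncomputable def kChain (I : Ideal (MvPolynomial σ k)) (i : ℕ) (j : σ →₀ ℕ) :
    Submodule k (Finset σ → MvPolynomial σ k) where
  carrier := {c | ∀ S : Finset σ,
    (S.card ≠ i → c S = 0) ∧ c S ∈ I ∧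
    ∀ m ∈ (c S).support, m + ∑ t ∈ S, Finsupp.single t 1 = j}
  zero_mem' := by intro S; simp
  add_mem' := by
    intro c d hc hd S
    refine ⟨fun h => by simp [ (hc S).1 h, (hd S).1 h], I.add_mem (hc S).2.1 (hd S).2.1,
      fun m hm => ?_⟩
    rcases Finset.mem_union.mp (MvPolynomial.support_add hm) with h | h
    · exact (hc S).2.2 m h
    · exact (hd S).2.2 m h
  smul_mem' := by
    intro a c hc S
    refine ⟨fun h => by simp [(hc S).1 h], I.smul_of_tower_mem a (hc S).2.1,
      fun m hm => (hc S).2.2 m (MvPolynomial.support_smul hm)⟩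

/-- Koszul cycles in homological degree `i`, multidegree `j`. -/
noncomputable def koszulCycles (I : Ideal (MvPolynomial σ k)) (i : ℕ) (j : σ →₀ ℕ) :
    Submodule k (Finset σ → MvPolynomial σ k) :=
  kChain k σ I i j ⊓ LinearMap.ker (koszulD k σ)

/-- The multidegree-`j` piece of `Tor_i(k, I)`, computed as Koszul homology. -/
noncomputable abbrev koszulHomology (I : Ideal (MvPolynomial σ k)) (i : ℕ) (j : σ →₀ ℕ) :=
  ↥(koszulCycles k σ I i j) ⧸
    (Submodule.comap (koszulCycles k σ I i j).subtype
      ((kChain k σ I (i + 1) j).map (koszulD k σ)))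

/-- The multigraded Betti number `β_{i,j}(I) = dim_k Tor_i(k,I)_j`. -/
noncomputable def bettiNumber (I : Ideal (MvPolynomial σ k)) (i : ℕ) (j : σ →₀ ℕ) : ℕ :=
  Module.finrank k (koszulHomology k σ I i j)

/-- The graded Betti number `β_{i,d}(I)`, the sum of the multigraded Betti numbers over
all multidegrees of total degree `d`. -/
noncomputable def bettiNumberGr (I : Ideal (MvPolynomial σ k)) (i : ℕ) (d : ℕ) : ℕ :=
  ∑ᶠ j ∈ {j : σ →₀ ℕ | (j.sum fun _ e => e) = d}, bettiNumber k σ I i j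

/-- The total Betti number `β_i(I)`. -/
noncomputable def bettiTotal (I : Ideal (MvPolynomial σ k)) (i : ℕ) : ℕ :=
  ∑ᶠ j : σ →₀ ℕ, bettiNumber k σ I i j

/-- A monomial ideal. -/
def IsMonomialIdeal (I : Ideal (MvPolynomial σ k)) : Prop :=
  ∃ S : Set (σ →₀ ℕ), I = Ideal.span ((fun m => (monomial m (1 : k) : MvPolynomial σ k)) '' S)

/-- The exponent vectors of the unique minimal monomial generating set `G(I)` of a
monomial ideal: monomials of `I` none of whose proper divisors lies in `I`. -/
def minGens (I : Ideal (MvPolynomial σ k)) : Set (σ →₀ ℕ) :=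
  {m | (monomial m (1 : k) : MvPolynomial σ k) ∈ I ∧
    ∀ m' : σ →₀ ℕ, m' ≤ m → m' ≠ m → (monomial m' (1 : k) : MvPolynomial σ k) ∉ I}

/-- A monomial ideal generated in a single degree `d` has a linear resolution if
`β_{i,j} = 0` whenever `j ≠ d + i`. -/
def HasLinearResolution (I : Ideal (MvPolynomial σ k)) : Prop :=
  ∃ d : ℕ, (∀ m ∈ minGens k σ I, (m.sum fun _ e => e) = d) ∧
    ∀ (i j : ℕ), j ≠ d + i → bettiNumberGr k σ I i j = 0

/-- `I = J + K` is a Betti splitting (graded version):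
`β_{i,j}(I) = β_{i,j}(J) + β_{i,j}(K) + β_{i-1,j}(J ∩ K)` for all `i` and degrees `j`. -/
def IsBettiSplittingGr (J K : Ideal (MvPolynomial σ k)) : Prop :=
  ∀ (i j : ℕ),
    bettiNumberGr k σ (J + K) i j =
      bettiNumberGr k σ J i j + bettiNumberGr k σ K i j +
        (if i = 0 then 0 else bettiNumberGr k σ (J ⊓ K) (i - 1) j)

/-- Projective dimension: `pd(I) = max {i : β_{i,j}(I) ≠ 0 for some j}`. -/
noncomputable def projDim (I : Ideal (MvPolynomial σ k)) : ℕ :=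
  sSup {i : ℕ | ∃ j : σ →₀ ℕ, bettiNumber k σ I i j ≠ 0}

/-- Castelnuovo–Mumford regularity: `reg(I) = max {j - i : β_{i,j}(I) ≠ 0}`. -/
noncomputable def regIdeal (I : Ideal (MvPolynomial σ k)) : ℕ :=
  sSup {d : ℕ | ∃ i j : ℕ, bettiNumberGr k σ I i j ≠ 0 ∧ j = d + i}

/-- Castelnuovo–Mumford regularity of the quotient `R/I`, for `I ≠ R`: since
`β_{i+1,j}(R/I) = β_{i,j}(I)` and `β_{0,0}(R/I) = 1`, we have
`reg(R/I) = max {j - (i+1) : β_{i,j}(I) ≠ 0}`. -/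
noncomputable def regQuot (I : Ideal (MvPolynomial σ k)) : ℕ :=
  sSup {d : ℕ | ∃ i j : ℕ, bettiNumberGr k σ I i j ≠ 0 ∧ j = d + i + 1}


/-! ### Auxiliary lemmas -/

section Aux

theorem koszulD_apply (c : Finset σ → MvPolynomial σ k) (S : Finset σ) :
    koszulD k σ c S = ∑ t ∈ Sᶜ,
      (-1 : MvPolynomial σ k) ^ (S.filter (fun s => s < t)).card * (X t * c (insert t S)) := rfl

theorem koszulD_koszulD (c : Finset σ → MvPolynomial σ k) :
    koszulD k σ (koszulD k σ c) = 0 := by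
  funext S
  rw [koszulD_apply]
  simp only [koszulD_apply, Finset.mul_sum, mul_left_comm, ← mul_assoc]
  rw [Finset.sum_sigma']
  refine Finset.sum_involution
    (fun p _ => ⟨p.2, p.1⟩) ?_ ?_ ?_ ?_
  · rintro ⟨t, u⟩ hp
    simp only [Finset.mem_sigma, Finset.mem_compl, Finset.compl_insert, Finset.mem_erase] at hp
    obtain ⟨ht, hu_ne, hu⟩ := hp
    dsimp only
    have htu : t ≠ u := fun h => hu_ne h.symm
    have hins : insert u (insert t S) = insert t (insert u S) := Finset.insert_comm _ _ _
    have hft : Finset.filter (fun s => s < t) (insert u S)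
        = if u < t then insert u (S.filter (fun s => s < t)) else S.filter (fun s => s < t) := by
      rw [Finset.filter_insert]
    have hfu : Finset.filter (fun s => s < u) (insert t S)
        = if t < u then insert t (S.filter (fun s => s < u)) else S.filter (fun s => s < u) := by
      rw [Finset.filter_insert]
    set a := (S.filter (fun s => s < u)).card with ha
    set b := (S.filter (fun s => s < t)).card with hb
    rcases htu.lt_or_gt with h | h
    · rw [hins]
      rw [hfu, if_pos h, hft, if_neg (not_lt.mpr h.le)]
      rw [Finset.card_insert_of_notMem (fun hm => ht (Finset.mem_filter.mp hm).1)]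
      ring
    · rw [hins]
      rw [hfu, if_neg (not_lt.mpr h.le), hft, if_pos h,
        Finset.card_insert_of_notMem (fun hm => hu (Finset.mem_filter.mp hm).1)]
      ring
  · rintro ⟨t, u⟩ hp _
    simp only [Finset.mem_sigma, Finset.mem_compl, Finset.compl_insert, Finset.mem_erase] at hp
    intro h
    have : t = u := congrArg Sigma.fst h.symm
    exact hp.2.1 this.symm
  · rintro ⟨t, u⟩ hp
    simp only [Finset.mem_sigma, Finset.mem_compl, Finset.compl_insert, Finset.mem_erase] at hp ⊢
    exact ⟨hp.2.2, fun h => hp.2.1 h.symm, hp.1⟩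
  · rintro ⟨t, u⟩ _
    rfl

theorem mem_kChain {L : Ideal (MvPolynomial σ k)} {i : ℕ} {j : σ →₀ ℕ}
    {c : Finset σ → MvPolynomial σ k} :
    c ∈ kChain k σ L i j ↔ ∀ S : Finset σ,
      (S.card ≠ i → c S = 0) ∧ c S ∈ L ∧
      ∀ m ∈ (c S).support, m + ∑ t ∈ S, Finsupp.single t 1 = j := Iff.rfl

theorem kChain_mono {L L' : Ideal (MvPolynomial σ k)} (h : L ≤ L') (i : ℕ) (j : σ →₀ ℕ) :
    kChain k σ L i j ≤ kChain k σ L' i j := by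
  intro c hc S
  exact ⟨(hc S).1, h (hc S).2.1, (hc S).2.2⟩

theorem kChain_inf (J K : Ideal (MvPolynomial σ k)) (i : ℕ) (j : σ →₀ ℕ) :
    kChain k σ (J ⊓ K) i j = kChain k σ J i j ⊓ kChain k σ K i j := by
  refine le_antisymm (le_inf (kChain_mono k σ inf_le_left i j)
    (kChain_mono k σ inf_le_right i j)) ?_
  rintro c ⟨hcJ, hcK⟩ S
  exact ⟨(hcJ S).1, ⟨(hcJ S).2.1, (hcK S).2.1⟩, (hcJ S).2.2⟩

theorem map_koszulD_kChain_le (L : Ideal (MvPolynomial σ k)) (i : ℕ) (j : σ →₀ ℕ) :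
    Submodule.map (koszulD k σ) (kChain k σ L (i + 1) j) ≤ kChain k σ L i j := by
  rintro _ ⟨c, hc, rfl⟩ S
  rw [koszulD_apply]
  refine ⟨fun hcard => ?_, ?_, ?_⟩
  · refine Finset.sum_eq_zero fun t ht => ?_
    have : (insert t S).card ≠ i + 1 := by
      rw [Finset.card_insert_of_notMem (Finset.mem_compl.mp ht)]
      omega
    rw [(hc (insert t S)).1 this, mul_zero, mul_zero]
  · exact Ideal.sum_mem _ fun t _ =>
      Ideal.mul_mem_left _ _ (Ideal.mul_mem_left _ _ (hc (insert t S)).2.1)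
  · intro m hm
    obtain ⟨t, ht, hmt⟩ := Finset.mem_biUnion.mp (MvPolynomial.support_sum hm)
    have h1 : ((-1 : MvPolynomial σ k) ^ (S.filter (fun s => s < t)).card
        * (X t * c (insert t S))) = ((-1 : k) ^ (S.filter (fun s => s < t)).card)
        • (X t * c (insert t S)) := by
      rw [MvPolynomial.smul_eq_C_mul, map_pow, map_neg, map_one]
    rw [h1] at hmt
    have hmt2 := MvPolynomial.support_smul hmt
    have hmt3 := MvPolynomial.support_mul _ _ hmt2
    rw [Finset.mem_add] at hmt3
    obtain ⟨m1, hm1, m2, hm2, rfl⟩ := hmt3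
    rw [MvPolynomial.support_X, Finset.mem_singleton] at hm1
    subst hm1
    have htS : t ∉ S := Finset.mem_compl.mp ht
    have := (hc (insert t S)).2.2 m2 hm2
    rw [Finset.sum_insert htS] at this
    rw [← this]
    abel

theorem kChain_zero_le_ker (L : Ideal (MvPolynomial σ k)) (j : σ →₀ ℕ) :
    kChain k σ L 0 j ≤ LinearMap.ker (koszulD k σ) := by
  intro c hc
  rw [LinearMap.mem_ker]
  funext S
  rw [koszulD_apply]
  refine Finset.sum_eq_zero fun t ht => ?_
  have : (insert t S).card ≠ 0 := by
    simp [Finset.card_insert_of_notMem (Finset.mem_compl.mp ht)]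
  rw [(hc (insert t S)).1 this, mul_zero, mul_zero]


theorem kChain_support_unique {L : Ideal (MvPolynomial σ k)} {i : ℕ} {j : σ →₀ ℕ}
    {c : Finset σ → MvPolynomial σ k} (hc : c ∈ kChain k σ L i j) (S : Finset σ)
    {m : σ →₀ ℕ} (hm : m ∈ (c S).support) : m = j - ∑ t ∈ S, Finsupp.single t 1 := by
  have := (hc S).2.2 m hm
  exact eq_tsub_of_add_eq this

instance kChain_finiteDimensional (L : Ideal (MvPolynomial σ k)) (i : ℕ) (j : σ →₀ ℕ) :
    FiniteDimensional k ↥(kChain k σ L i j) := by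
  classical
  let Φ : (Finset σ → MvPolynomial σ k) →ₗ[k] (Finset σ → k) :=
    LinearMap.pi fun S =>
      (MvPolynomial.lcoeff k (j - ∑ t ∈ S, Finsupp.single t 1)).comp (LinearMap.proj S)
  refine FiniteDimensional.of_injective (Φ.comp (kChain k σ L i j).subtype) ?_
  rw [← LinearMap.ker_eq_bot, LinearMap.ker_eq_bot']
  rintro ⟨c, hc⟩ hzero
  refine Subtype.ext ?_
  funext S
  by_contra hne
  obtain ⟨m, hm⟩ := MvPolynomial.support_nonempty.mpr hne
  have hmeq := kChain_support_unique k σ hc S hm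
  have hPhi : Φ c = 0 := hzero
  have hcoeff : MvPolynomial.coeff (j - ∑ t ∈ S, Finsupp.single t 1) (c S) = 0 :=
    congrFun hPhi S
  rw [← hmeq] at hcoeff
  exact (MvPolynomial.mem_support_iff.mp hm) hcoeff


theorem monomial_mem_of_mem_support {L : Ideal (MvPolynomial σ k)}
    (hL : IsMonomialIdeal k σ L) {f : MvPolynomial σ k} (hf : f ∈ L)
    {m : σ →₀ ℕ} (hm : m ∈ f.support) : (monomial m (1 : k)) ∈ L := by
  classical
  obtain ⟨S, rfl⟩ := hL
  rw [mem_ideal_span_monomial_image] at hf ⊢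
  intro xi hxi
  rw [MvPolynomial.support_monomial, if_neg (one_ne_zero)] at hxi
  rw [Finset.mem_singleton] at hxi
  rw [hxi]
  exact hf m hm

theorem monomial_mem_of_le {L : Ideal (MvPolynomial σ k)}
    (hL : IsMonomialIdeal k σ L) {m m' : σ →₀ ℕ}
    (hm' : (monomial m' (1 : k)) ∈ L) (hle : m' ≤ m) : (monomial m (1 : k)) ∈ L := by
  classical
  obtain ⟨S, rfl⟩ := hL
  rw [mem_ideal_span_monomial_image] at hm' ⊢
  intro xi hxi
  rw [MvPolynomial.support_monomial, if_neg (one_ne_zero), Finset.mem_singleton] at hxi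
  rw [hxi]
  obtain ⟨s, hs, hsle⟩ := hm' m' (by
    rw [MvPolynomial.support_monomial, if_neg (one_ne_zero)]; exact Finset.mem_singleton_self _)
  exact ⟨s, hs, hsle.trans hle⟩

theorem finsupp_sum_lt_of_lt {m' m : σ →₀ ℕ} (hle : m' ≤ m) (hne : m' ≠ m) :
    (m'.sum fun _ e => e) < m.sum fun _ e => e := by
  have hadd : m' + (m - m') = m := add_tsub_cancel_of_le hle
  have hsum : ((m' + (m - m')).sum fun _ e => e)
      = (m'.sum fun _ e => e) + ((m - m').sum fun _ e => e) :=
    Finsupp.sum_add_index' (fun _ => rfl) (fun _ _ _ => rfl)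
  have hd : m - m' ≠ 0 := by
    intro h
    rw [h, add_zero] at hadd
    exact hne hadd
  have hpos : 0 < ((m - m').sum fun _ e => e) := by
    obtain ⟨a, ha⟩ := Finsupp.support_nonempty_iff.mpr hd
    have h1 : (m - m') a ≤ ((m - m').sum fun _ e => e) :=
      Finset.single_le_sum (fun _ _ => Nat.zero_le _) ha
    have h2 : 0 < (m - m') a := Nat.pos_of_ne_zero (Finsupp.mem_support_iff.mp ha)
    omega
  rw [hadd] at hsum
  omega

theorem exists_minGen_le (L : Ideal (MvPolynomial σ k)) :
    ∀ (N : ℕ) (m : σ →₀ ℕ), (m.sum fun _ e => e) = N → (monomial m (1 : k)) ∈ L →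
      ∃ g ∈ minGens k σ L, g ≤ m := by
  intro N
  induction N using Nat.strong_induction_on with
  | _ N ih =>
    intro m hN hm
    by_cases h : m ∈ minGens k σ L
    · exact ⟨m, h, le_refl m⟩
    · rw [minGens, Set.mem_setOf_eq] at h
      push_neg at h
      obtain ⟨m', hle, hne, hmem⟩ := h hm
      obtain ⟨g, hg, hgle⟩ := ih (m'.sum fun _ e => e)
        (hN ▸ finsupp_sum_lt_of_lt (σ := σ) hle hne) m' rfl hmem
      exact ⟨g, hg, hgle.trans hle⟩

theorem monomial_mem_sum_iff {J K : Ideal (MvPolynomial σ k)}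
    (hJ : IsMonomialIdeal k σ J) (hK : IsMonomialIdeal k σ K) (m : σ →₀ ℕ) :
    (monomial m (1 : k)) ∈ J + K ↔ (monomial m (1 : k)) ∈ J ∨ (monomial m (1 : k)) ∈ K := by
  classical
  obtain ⟨SJ, rfl⟩ := hJ
  obtain ⟨SK, rfl⟩ := hK
  classical
  rw [Submodule.add_eq_sup, ← Ideal.span_union, ← Set.image_union]
  rw [mem_ideal_span_monomial_image, mem_ideal_span_monomial_image,
    mem_ideal_span_monomial_image]
  simp only [MvPolynomial.support_monomial, if_neg (one_ne_zero : (1:k) ≠ 0),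
    Finset.mem_singleton, forall_eq]
  constructor
  · rintro ⟨s, hs | hs, hle⟩
    · exact Or.inl ⟨s, hs, hle⟩
    · exact Or.inr ⟨s, hs, hle⟩
  · rintro (⟨s, hs, hle⟩ | ⟨s, hs, hle⟩)
    · exact ⟨s, Or.inl hs, hle⟩
    · exact ⟨s, Or.inr hs, hle⟩

theorem kChain_mem_or {I J K : Ideal (MvPolynomial σ k)}
    (hI : IsMonomialIdeal k σ I) (hJ : IsMonomialIdeal k σ J) (hK : IsMonomialIdeal k σ K)
    (hsum : I = J + K) {i : ℕ} {j : σ →₀ ℕ} {c : Finset σ → MvPolynomial σ k}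
    (hc : c ∈ kChain k σ I i j) (S : Finset σ) : c S ∈ J ∨ c S ∈ K := by
  classical
  by_cases hz : c S = 0
  · exact Or.inl (hz ▸ J.zero_mem)
  · obtain ⟨m, hm⟩ := MvPolynomial.support_nonempty.mpr hz
    have hmon : (monomial m (1 : k)) ∈ I := monomial_mem_of_mem_support k σ hI (hc S).2.1 hm
    rw [hsum] at hmon
    rcases (monomial_mem_sum_iff k σ hJ hK m).mp hmon with h | h
    · left
      obtain ⟨SJ, hSJ⟩ := hJ
      rw [hSJ, mem_ideal_span_monomial_image] at h ⊢
      intro xi hxi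
      have hxim : xi = m := by
        rw [kChain_support_unique k σ hc S hxi, kChain_support_unique k σ hc S hm]
      rw [hxim]
      obtain ⟨s, hs, hsle⟩ := h m (by
        classical
        rw [MvPolynomial.support_monomial, if_neg (one_ne_zero)]
        exact Finset.mem_singleton_self _)
      exact ⟨s, hs, hsle⟩
    · right
      obtain ⟨SK, hSK⟩ := hK
      rw [hSK, mem_ideal_span_monomial_image] at h ⊢
      intro xi hxi
      have hxim : xi = m := by
        rw [kChain_support_unique k σ hc S hxi, kChain_support_unique k σ hc S hm]
      rw [hxim]
      obtain ⟨s, hs, hsle⟩ := h m (by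
        classical
        rw [MvPolynomial.support_monomial, if_neg (one_ne_zero)]
        exact Finset.mem_singleton_self _)
      exact ⟨s, hs, hsle⟩

theorem kChain_sup {I J K : Ideal (MvPolynomial σ k)}
    (hI : IsMonomialIdeal k σ I) (hJ : IsMonomialIdeal k σ J) (hK : IsMonomialIdeal k σ K)
    (hsum : I = J + K) (i : ℕ) (j : σ →₀ ℕ) :
    kChain k σ I i j = kChain k σ J i j ⊔ kChain k σ K i j := by
  refine le_antisymm ?_ (sup_le
    (kChain_mono k σ (hsum ▸ le_sup_left) i j) (kChain_mono k σ (hsum ▸ le_sup_right) i j))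
  intro c hc
  classical
  set cJ : Finset σ → MvPolynomial σ k := fun S => if c S ∈ J then c S else 0 with hcJdef
  set cK : Finset σ → MvPolynomial σ k := fun S => if c S ∈ J then 0 else c S with hcKdef
  have hcJ : cJ ∈ kChain k σ J i j := by
    intro S
    refine ⟨fun h => ?_, ?_, fun m hm => ?_⟩
    · simp only [hcJdef, (hc S).1 h, if_pos J.zero_mem]
    · by_cases h : c S ∈ J
      · simpa only [hcJdef, if_pos h] using h
      · simp only [hcJdef, if_neg h]
        exact J.zero_mem
    · by_cases h : c S ∈ J
      · exact (hc S).2.2 m (by simpa only [hcJdef, if_pos h] using hm)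
      · simp only [hcJdef, if_neg h, MvPolynomial.support_zero] at hm
        exact absurd hm (Finset.notMem_empty m)
  have hcK : cK ∈ kChain k σ K i j := by
    intro S
    refine ⟨fun h => ?_, ?_, fun m hm => ?_⟩
    · simp only [hcKdef, (hc S).1 h, if_pos J.zero_mem]
    · by_cases h : c S ∈ J
      · simp only [hcKdef, if_pos h]
        exact K.zero_mem
      · simp only [hcKdef, if_neg h]
        rcases kChain_mem_or k σ hI hJ hK hsum hc S with h' | h'
        · exact absurd h' h
        · exact h'
    · by_cases h : c S ∈ J
      · simp only [hcKdef, if_pos h, MvPolynomial.support_zero] at hm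
        exact absurd hm (Finset.notMem_empty m)
      · exact (hc S).2.2 m (by simpa only [hcKdef, if_neg h] using hm)
  refine Submodule.mem_sup.mpr ⟨cJ, hcJ, cK, hcK, ?_⟩
  funext S
  by_cases h : c S ∈ J <;> simp [hcJdef, hcKdef, if_pos, if_neg, h]


theorem map_koszulD_le_cycles (L : Ideal (MvPolynomial σ k)) (i : ℕ) (j : σ →₀ ℕ) :
    Submodule.map (koszulD k σ) (kChain k σ L (i + 1) j) ≤ koszulCycles k σ L i j := by
  refine le_inf (map_koszulD_kChain_le k σ L i j) ?_
  rintro _ ⟨c, _, rfl⟩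
  exact LinearMap.mem_ker.mpr (koszulD_koszulD k σ c)

instance koszulCycles_finiteDimensional (L : Ideal (MvPolynomial σ k)) (i : ℕ) (j : σ →₀ ℕ) :
    FiniteDimensional k ↥(koszulCycles k σ L i j) :=
  Submodule.finiteDimensional_of_le (inf_le_left : koszulCycles k σ L i j ≤ kChain k σ L i j)

instance map_koszulD_finiteDimensional (L : Ideal (MvPolynomial σ k)) (i : ℕ) (j : σ →₀ ℕ) :
    FiniteDimensional k ↥(Submodule.map (koszulD k σ) (kChain k σ L (i + 1) j)) :=
  Submodule.finiteDimensional_of_le (map_koszulD_le_cycles k σ L i j)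

set_option synthInstance.maxHeartbeats 1000000 in
theorem bettiNumber_add_eq (L : Ideal (MvPolynomial σ k)) (i : ℕ) (j : σ →₀ ℕ) :
    bettiNumber k σ L i j
      + Module.finrank k ↥(Submodule.map (koszulD k σ) (kChain k σ L (i + 1) j))
      = Module.finrank k ↥(koszulCycles k σ L i j) := by
  rw [bettiNumber]
  have hle := map_koszulD_le_cycles k σ L i j
  have h := Submodule.finrank_quotient_add_finrank
    (Submodule.comap (koszulCycles k σ L i j).subtype
      (Submodule.map (koszulD k σ) (kChain k σ L (i + 1) j)))
  have he : Module.finrank k ↥(Submodule.comap (koszulCycles k σ L i j).subtype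
        (Submodule.map (koszulD k σ) (kChain k σ L (i + 1) j)))
      = Module.finrank k ↥(Submodule.map (koszulD k σ) (kChain k σ L (i + 1) j)) :=
    LinearEquiv.finrank_eq (Submodule.comapSubtypeEquivOfLe hle)
  rw [← he]
  exact h

theorem cycles_le_of_bettiNumber_zero {L : Ideal (MvPolynomial σ k)} {l : ℕ} {j : σ →₀ ℕ}
    (h : bettiNumber k σ L l j = 0) :
    koszulCycles k σ L l j ≤ Submodule.map (koszulD k σ) (kChain k σ L (l + 1) j) := by
  rw [bettiNumber] at h
  have hsub : Subsingleton (koszulHomology k σ L l j) := Module.finrank_zero_iff.mp h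
  have htop := Submodule.Quotient.subsingleton_iff.mp hsub
  intro z hz
  have : (⟨z, hz⟩ : ↥(koszulCycles k σ L l j)) ∈ Submodule.comap
      (koszulCycles k σ L l j).subtype
      (Submodule.map (koszulD k σ) (kChain k σ L (l + 1) j)) := htop ▸ Submodule.mem_top
  exact this

theorem sum_single_card (S : Finset σ) :
    ((∑ t ∈ S, Finsupp.single t 1).sum fun _ e => e) = S.card := by
  classical
  induction S using Finset.induction with
  | empty => simp
  | insert _ _ h ih =>
    rw [Finset.sum_insert h, Finsupp.sum_add_index' (fun _ => rfl) (fun _ _ _ => rfl), ih,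
      Finsupp.sum_single_index rfl, Finset.card_insert_of_notMem h]
    omega

theorem chain_support_degree {L : Ideal (MvPolynomial σ k)} {l : ℕ} {j : σ →₀ ℕ}
    {c : Finset σ → MvPolynomial σ k} (hc : c ∈ kChain k σ L l j) {S : Finset σ}
    (hS : S.card = l) {m : σ →₀ ℕ} (hm : m ∈ (c S).support) :
    (m.sum fun _ e => e) + l = j.sum fun _ e => e := by
  have h := (hc S).2.2 m hm
  have := congrArg (fun v : σ →₀ ℕ => v.sum fun _ e => e) h
  try simp only at this
  rw [Finsupp.sum_add_index' (fun _ => rfl) (fun _ _ _ => rfl), sum_single_card (σ := σ)] at this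
  rw [← this, hS]

theorem eq_of_le_of_sum_eq {m' m : σ →₀ ℕ} (hle : m' ≤ m)
    (hsum : (m'.sum fun _ e => e) = m.sum fun _ e => e) : m' = m := by
  by_contra hne
  exact absurd hsum (Nat.ne_of_lt (finsupp_sum_lt_of_lt (σ := σ) hle hne))

/-- Key degree bound: minimal generators of `J ⊓ K` have degree strictly bigger than `dJ`,
so the chain spaces of `J ⊓ K` vanish in the degrees where `J` can have homology. -/
theorem kChain_inf_eq_bot {I J K : Ideal (MvPolynomial σ k)}
    (hJm : IsMonomialIdeal k σ J) (hKm : IsMonomialIdeal k σ K)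
    (hsum : I = J + K)
    (hgens : minGens k σ I = minGens k σ J ∪ minGens k σ K)
    (hdisj : Disjoint (minGens k σ J) (minGens k σ K))
    {dJ : ℕ} (hdJ : ∀ m ∈ minGens k σ J, (m.sum fun _ e => e) = dJ)
    (l : ℕ) {j : σ →₀ ℕ} (hj : (j.sum fun _ e => e) = dJ + l) :
    kChain k σ (J ⊓ K) l j = ⊥ := by
  rw [eq_bot_iff]
  intro c hc
  rw [Submodule.mem_bot]
  funext S
  by_cases hcard : S.card = l
  · by_contra hne
    obtain ⟨m, hm⟩ := MvPolynomial.support_nonempty.mpr hne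
    have hdeg : (m.sum fun _ e => e) + l = j.sum fun _ e => e :=
      chain_support_degree k σ hc hcard hm
    have hmsum : (m.sum fun _ e => e) = dJ := by omega
    have hmJ : (monomial m (1 : k)) ∈ J :=
      monomial_mem_of_mem_support k σ hJm ((hc S).2.1.1) hm
    have hmK : (monomial m (1 : k)) ∈ K :=
      monomial_mem_of_mem_support k σ hKm ((hc S).2.1.2) hm
    obtain ⟨g, hg, hgle⟩ := exists_minGen_le k σ J (m.sum fun _ e => e) m rfl hmJ
    have hgm : g = m := eq_of_le_of_sum_eq (σ := σ) hgle (by rw [hdJ g hg, hmsum])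
    subst hgm
    have hgI : g ∈ minGens k σ I := by
      rw [hgens]; exact Set.mem_union_left _ hg
    obtain ⟨g', hg', hg'le⟩ := exists_minGen_le k σ K (g.sum fun _ e => e) g rfl hmK
    have hg'ne : g' ≠ g := by
      intro h
      subst h
      exact Set.disjoint_left.mp hdisj hg hg'
    exact absurd (hsum ▸ Submodule.mem_sup_right hg'.1) (hgI.2 g' hg'le hg'ne)
  · exact (hc S).1 hcard

theorem setOf_sum_eq_finite (q : ℕ) :
    {j : σ →₀ ℕ | (j.sum fun _ e => e) = q}.Finite := by
  rw [← Set.finite_coe_iff]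
  have hbound : ∀ j : {j : σ →₀ ℕ | (j.sum fun _ e => e) = q}, ∀ a : σ, (j : σ →₀ ℕ) a < q + 1 := by
    rintro ⟨j, hj⟩ a
    simp only [Set.mem_setOf_eq, Finsupp.sum] at hj
    show j a < q + 1
    by_cases h : a ∈ j.support
    · have h2 := Finset.single_le_sum (f := fun x => j x) (fun _ _ => Nat.zero_le _) h
      try simp only at h2 hj
      omega
    · rw [Finsupp.notMem_support_iff.mp h]
      omega
  refine Finite.of_injective (fun j => fun a : σ => (⟨(j : σ →₀ ℕ) a, hbound j a⟩ : Fin (q + 1)))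
    ?_
  rintro ⟨j1, h1⟩ ⟨j2, h2⟩ h
  refine Subtype.ext (Finsupp.ext fun a => ?_)
  have := congrFun h a
  simpa using congrArg Fin.val this

theorem bettiNumber_eq_zero_of_gr {L : Ideal (MvPolynomial σ k)} {l q : ℕ}
    (h : bettiNumberGr k σ L l q = 0) {j : σ →₀ ℕ} (hj : (j.sum fun _ e => e) = q) :
    bettiNumber k σ L l j = 0 := by
  rw [bettiNumberGr] at h
  have hfin := setOf_sum_eq_finite (σ := σ) q
  rw [← hfin.coe_toFinset, finsum_mem_coe_finset] at h
  exact (Finset.sum_eq_zero_iff.mp h) j (hfin.mem_toFinset.mpr hj)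


section MV

variable {F : Type*} [Field F] {V' : Type*} [AddCommGroup V'] [Module F V']

theorem finrank_map_add_finrank_inf_ker (d : V' →ₗ[F] V') (N : Submodule F V')
    [FiniteDimensional F N] :
    Module.finrank F ↥(Submodule.map d N) + Module.finrank F ↥(N ⊓ LinearMap.ker d)
      = Module.finrank F ↥N := by
  have h := LinearMap.finrank_range_add_finrank_ker (d.comp N.subtype)
  rw [LinearMap.range_comp, Submodule.range_subtype, LinearMap.ker_comp] at h
  rw [← h]
  congr 1
  have e1 : Module.finrank F ↥(Submodule.comap N.subtype (LinearMap.ker d))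
      = Module.finrank F
        ↥(Submodule.map N.subtype (Submodule.comap N.subtype (LinearMap.ker d))) :=
    LinearEquiv.finrank_eq
      (Submodule.equivSubtypeMap N (Submodule.comap N.subtype (LinearMap.ker d)))
  rw [e1, Submodule.map_comap_subtype]

set_option maxHeartbeats 1000000 in
set_option synthInstance.maxHeartbeats 1000000 in
theorem mv_six (d : V' →ₗ[F] V') (hdd : ∀ v, d (d v) = 0)
    (P₂ P₁ P₀ Q₂ Q₁ Q₀ : Submodule F V')
    [FiniteDimensional F P₁] [FiniteDimensional F Q₁]
    [FiniteDimensional F P₂] [FiniteDimensional F Q₂]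
    (h2P : Submodule.map d P₂ ≤ P₁) (h2Q : Submodule.map d Q₂ ≤ Q₁)
    (h1P : Submodule.map d P₁ ≤ P₀) (h1Q : Submodule.map d Q₁ ≤ Q₀)
    (hA1 : P₁ ⊓ Q₁ ⊓ LinearMap.ker d ≤ Submodule.map d P₂ ⊓ Submodule.map d Q₂)
    (hA0 : P₀ ⊓ Q₀ ⊓ LinearMap.ker d ≤ Submodule.map d P₁ ⊓ Submodule.map d Q₁) :
    Module.finrank F ↥((P₁ ⊔ Q₁) ⊓ LinearMap.ker d)
      + Module.finrank F ↥(Submodule.map d P₂) + Module.finrank F ↥(Submodule.map d Q₂)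
      + Module.finrank F ↥(Submodule.map d (P₁ ⊓ Q₁))
    = Module.finrank F ↥(Submodule.map d P₂ ⊔ Submodule.map d Q₂)
      + Module.finrank F ↥(P₁ ⊓ LinearMap.ker d) + Module.finrank F ↥(Q₁ ⊓ LinearMap.ker d)
      + Module.finrank F ↥(P₀ ⊓ Q₀ ⊓ LinearMap.ker d) := by
  classical
  have map_le_ker : ∀ N : Submodule F V', Submodule.map d N ≤ LinearMap.ker d := by
    rintro N _ ⟨v, _, rfl⟩
    exact LinearMap.mem_ker.mpr (hdd v)
  have eqZA : P₁ ⊓ Q₁ ⊓ LinearMap.ker d = Submodule.map d P₂ ⊓ Submodule.map d Q₂ :=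
    le_antisymm hA1 (le_inf (le_inf (inf_le_left.trans h2P) (inf_le_right.trans h2Q))
      (inf_le_left.trans (map_le_ker P₂)))
  have eqZA' : P₀ ⊓ Q₀ ⊓ LinearMap.ker d = Submodule.map d P₁ ⊓ Submodule.map d Q₁ :=
    le_antisymm hA0 (le_inf (le_inf (inf_le_left.trans h1P) (inf_le_right.trans h1Q))
      (inf_le_left.trans (map_le_ker P₁)))
  haveI : FiniteDimensional F ↥(P₁ ⊓ Q₁) := Submodule.finiteDimensional_of_le inf_le_left
  haveI hWfd : FiniteDimensional F ↥(P₁.prod Q₁) := by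
    rw [LinearMap.prod_eq_sup_map]
    infer_instance
  set s : V' × V' →ₗ[F] V' := LinearMap.fst F V' V' + LinearMap.snd F V' V' with hs
  set W : Submodule F (V' × V') := P₁.prod Q₁ ⊓ LinearMap.ker (d ∘ₗ s) with hW
  haveI : FiniteDimensional F ↥W := Submodule.finiteDimensional_of_le inf_le_left
  have hWmem : ∀ p q : V', ((p, q) ∈ W ↔ p ∈ P₁ ∧ q ∈ Q₁ ∧ d (p + q) = 0) := by
    intro p q
    simp only [hW, Submodule.mem_inf, Submodule.mem_prod, LinearMap.mem_ker,
      LinearMap.comp_apply, hs, LinearMap.add_apply, LinearMap.fst_apply, LinearMap.snd_apply]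
    tauto
  set φ : ↥W →ₗ[F] V' := s ∘ₗ W.subtype with hφ
  set ψ : ↥W →ₗ[F] V' := (d ∘ₗ LinearMap.fst F V' V') ∘ₗ W.subtype with hψ
  have hφval : ∀ (p q : V') (hw : (p, q) ∈ W), φ ⟨(p, q), hw⟩ = p + q := fun _ _ _ => rfl
  have hψval : ∀ (p q : V') (hw : (p, q) ∈ W), ψ ⟨(p, q), hw⟩ = d p := fun _ _ _ => rfl
  have hφrange : LinearMap.range φ = (P₁ ⊔ Q₁) ⊓ LinearMap.ker d := by
    apply le_antisymm
    · rintro _ ⟨⟨⟨p, q⟩, hw⟩, rfl⟩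
      obtain ⟨hp, hq, hk⟩ := (hWmem p q).mp hw
      rw [hφval p q hw]
      exact ⟨Submodule.mem_sup.mpr ⟨p, hp, q, hq, rfl⟩, LinearMap.mem_ker.mpr hk⟩
    · rintro z ⟨hzs, hzk⟩
      obtain ⟨p, hp, q, hq, rfl⟩ := Submodule.mem_sup.mp hzs
      exact ⟨⟨(p, q), (hWmem p q).mpr ⟨hp, hq, LinearMap.mem_ker.mp hzk⟩⟩, hφval p q _⟩
  have hψrange : LinearMap.range ψ = Submodule.map d P₁ ⊓ Submodule.map d Q₁ := by
    apply le_antisymm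
    · rintro _ ⟨⟨⟨p, q⟩, hw⟩, rfl⟩
      obtain ⟨hp, hq, hk⟩ := (hWmem p q).mp hw
      rw [hψval p q hw]
      rw [map_add] at hk
      refine ⟨⟨p, hp, rfl⟩, ⟨-q, Q₁.neg_mem hq, ?_⟩⟩
      rw [map_neg]
      exact neg_eq_of_add_eq_zero_right (by rw [add_comm]; exact hk)
    · rintro z ⟨⟨p, hp, rfl⟩, ⟨q, hq, hdq⟩⟩
      refine ⟨⟨(p, -q), (hWmem p (-q)).mpr ⟨hp, Q₁.neg_mem hq, ?_⟩⟩, hψval p (-q) _⟩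
      rw [map_add, map_neg, hdq]
      simp
  have hkerφ : Module.finrank F ↥(LinearMap.ker φ) = Module.finrank F ↥(P₁ ⊓ Q₁) := by
    have hmem : ∀ a : ↥(P₁ ⊓ Q₁), ((a : V'), -(a : V')) ∈ W := fun a =>
      (hWmem _ _).mpr ⟨a.2.1, Q₁.neg_mem a.2.2, by simp⟩
    let f0 : ↥(P₁ ⊓ Q₁) →ₗ[F] V' × V' :=
      (LinearMap.prod LinearMap.id (-LinearMap.id)) ∘ₗ (P₁ ⊓ Q₁).subtype
    let f1 : ↥(P₁ ⊓ Q₁) →ₗ[F] ↥W := LinearMap.codRestrict W f0 fun a => hmem a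
    let f2 : ↥(P₁ ⊓ Q₁) →ₗ[F] ↥(LinearMap.ker φ) := LinearMap.codRestrict _ f1 fun a => by
      rw [LinearMap.mem_ker]
      show (a : V') + (-(a : V')) = 0
      simp
    refine (LinearEquiv.finrank_eq (LinearEquiv.ofBijective f2 ⟨?_, ?_⟩)).symm
    · intro a b hab
      have h1 := congrArg (fun x : ↥(LinearMap.ker φ) => (((x : ↥W) : V' × V')).1) hab
      exact Subtype.ext h1
    · rintro ⟨⟨⟨p, q⟩, hw⟩, hk⟩
      obtain ⟨hp, hq, _⟩ := (hWmem p q).mp hw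
      have hpq : p + q = 0 := by
        have := LinearMap.mem_ker.mp hk
        rwa [hφval p q hw] at this
      have hqp : q = -p := eq_neg_of_add_eq_zero_right hpq
      refine ⟨⟨p, hp, ?_⟩, ?_⟩
      · rw [hqp] at hq
        simpa using hq
      · apply Subtype.ext
        apply Subtype.ext
        show ((p : V'), -(p : V')) = (p, q)
        rw [hqp]
  have hkerψ : Module.finrank F ↥(LinearMap.ker ψ)
      = Module.finrank F ↥(P₁ ⊓ LinearMap.ker d)
        + Module.finrank F ↥(Q₁ ⊓ LinearMap.ker d) := by
    let g0 : ↥(P₁ ⊓ LinearMap.ker d) × ↥(Q₁ ⊓ LinearMap.ker d) →ₗ[F] V' × V' :=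
      LinearMap.prodMap (P₁ ⊓ LinearMap.ker d).subtype (Q₁ ⊓ LinearMap.ker d).subtype
    have hg0 : ∀ x, g0 x ∈ W := by
      rintro ⟨⟨p, hp⟩, ⟨q, hq⟩⟩
      exact (hWmem p q).mpr ⟨hp.1, hq.1, by
        rw [map_add, LinearMap.mem_ker.mp hp.2, LinearMap.mem_ker.mp hq.2, add_zero]⟩
    let g1 : _ →ₗ[F] ↥W := LinearMap.codRestrict W g0 hg0
    let g2 : ↥(P₁ ⊓ LinearMap.ker d) × ↥(Q₁ ⊓ LinearMap.ker d) →ₗ[F] ↥(LinearMap.ker ψ) :=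
      LinearMap.codRestrict _ g1 fun x => by
        rw [LinearMap.mem_ker]
        rcases x with ⟨⟨p, hp⟩, ⟨q, hq⟩⟩
        show d p = 0
        exact LinearMap.mem_ker.mp hp.2
    have heq : Module.finrank F ↥(LinearMap.ker ψ)
        = Module.finrank F (↥(P₁ ⊓ LinearMap.ker d) × ↥(Q₁ ⊓ LinearMap.ker d)) := by
      refine (LinearEquiv.finrank_eq (LinearEquiv.ofBijective g2 ⟨?_, ?_⟩)).symm
      · rintro ⟨⟨p1, hp1⟩, ⟨q1, hq1⟩⟩ ⟨⟨p2, hp2⟩, ⟨q2, hq2⟩⟩ hab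
        have h1 := congrArg (fun x : ↥(LinearMap.ker ψ) => (((x : ↥W) : V' × V')).1) hab
        have h2 := congrArg (fun x : ↥(LinearMap.ker ψ) => (((x : ↥W) : V' × V')).2) hab
        try simp only at h1 h2
        exact Prod.ext (Subtype.ext h1) (Subtype.ext h2)
      · rintro ⟨⟨⟨p, q⟩, hw⟩, hk⟩
        obtain ⟨hp, hq, hsum⟩ := (hWmem p q).mp hw
        have hdp : d p = 0 := by
          have := LinearMap.mem_ker.mp hk
          rwa [hψval p q hw] at this
        have hdq : d q = 0 := by
          rw [map_add, hdp, zero_add] at hsum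
          exact hsum
        refine ⟨(⟨p, hp, LinearMap.mem_ker.mpr hdp⟩, ⟨q, hq, LinearMap.mem_ker.mpr hdq⟩), ?_⟩
        apply Subtype.ext
        apply Subtype.ext
        show ((p : V'), (q : V')) = (p, q)
        rfl
    rw [heq, Module.finrank_prod]
  have n1 := LinearMap.finrank_range_add_finrank_ker φ
  have n2 := LinearMap.finrank_range_add_finrank_ker ψ
  rw [hφrange, hkerφ] at n1
  rw [hψrange, ← eqZA', hkerψ] at n2
  have n3 := Submodule.finrank_sup_add_finrank_inf_eq (Submodule.map d P₂) (Submodule.map d Q₂)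
  rw [← eqZA] at n3
  have n4 := finrank_map_add_finrank_inf_ker d (P₁ ⊓ Q₁)
  omega

end MV


set_option maxHeartbeats 2000000 in
set_option synthInstance.maxHeartbeats 1000000 in
theorem betti_split_multidegree
    {I J K : Ideal (MvPolynomial σ k)}
    (hI : IsMonomialIdeal k σ I) (hJ : IsMonomialIdeal k σ J) (hK : IsMonomialIdeal k σ K)
    (hsum : I = J + K)
    (hgens : minGens k σ I = minGens k σ J ∪ minGens k σ K)
    (hdisj : Disjoint (minGens k σ J) (minGens k σ K))
    (hlinJ : HasLinearResolution k σ J)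
    (hlinK : HasLinearResolution k σ K)
    (i : ℕ) (j : σ →₀ ℕ) :
    bettiNumber k σ I i j = bettiNumber k σ J i j + bettiNumber k σ K i j +
      (if i = 0 then 0 else bettiNumber k σ (J ⊓ K) (i - 1) j) := by
  obtain ⟨dJ, hdJ, hvJ⟩ := hlinJ
  obtain ⟨dK, hdK, hvK⟩ := hlinK
  have hdd : ∀ c, koszulD k σ (koszulD k σ c) = 0 := koszulD_koszulD k σ
  have unfoldC : ∀ (L : Ideal (MvPolynomial σ k)) (l : ℕ),
      koszulCycles k σ L l j = kChain k σ L l j ⊓ LinearMap.ker (koszulD k σ) :=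
    fun L l => rfl
  -- the zero-map hypothesis, at every homological level
  have hAlev : ∀ l : ℕ, koszulCycles k σ (J ⊓ K) l j ≤
      Submodule.map (koszulD k σ) (kChain k σ J (l + 1) j)
        ⊓ Submodule.map (koszulD k σ) (kChain k σ K (l + 1) j) := by
    intro l
    refine le_inf ?_ ?_
    · by_cases h : (j.sum fun _ e => e) = dJ + l
      · have hbot : kChain k σ (J ⊓ K) l j = ⊥ :=
          kChain_inf_eq_bot k σ hJ hK hsum hgens hdisj hdJ l h
        rw [unfoldC]
        exact ((inf_le_left.trans hbot.le).trans bot_le)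
      · have hb : bettiNumber k σ J l j = 0 :=
          bettiNumber_eq_zero_of_gr k σ (hvJ l (j.sum fun _ e => e) h) rfl
        have hmono : koszulCycles k σ (J ⊓ K) l j ≤ koszulCycles k σ J l j := by
          rw [unfoldC, unfoldC]
          exact inf_le_inf (kChain_mono k σ inf_le_left l j) le_rfl
        exact hmono.trans (cycles_le_of_bettiNumber_zero k σ hb)
    · by_cases h : (j.sum fun _ e => e) = dK + l
      · have hbot : kChain k σ (J ⊓ K) l j = ⊥ := by
          rw [inf_comm J K]
          exact kChain_inf_eq_bot k σ hK hJ (hsum.trans (add_comm J K))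
            (hgens.trans (Set.union_comm _ _)) hdisj.symm hdK l h
        rw [unfoldC]
        exact ((inf_le_left.trans hbot.le).trans bot_le)
      · have hb : bettiNumber k σ K l j = 0 :=
          bettiNumber_eq_zero_of_gr k σ (hvK l (j.sum fun _ e => e) h) rfl
        have hmono : koszulCycles k σ (J ⊓ K) l j ≤ koszulCycles k σ K l j := by
          rw [unfoldC, unfoldC]
          exact inf_le_inf (kChain_mono k σ inf_le_right l j) le_rfl
        exact hmono.trans (cycles_le_of_bettiNumber_zero k σ hb)
  by_cases hi : i = 0
  · subst hi
    rw [if_pos rfl, add_zero]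
    have eI := bettiNumber_add_eq k σ I 0 j
    have eJ := bettiNumber_add_eq k σ J 0 j
    have eK := bettiNumber_add_eq k σ K 0 j
    have hA1 : kChain k σ J 0 j ⊓ kChain k σ K 0 j ⊓ LinearMap.ker (koszulD k σ) ≤
        Submodule.map (koszulD k σ) (kChain k σ J (0 + 1) j)
          ⊓ Submodule.map (koszulD k σ) (kChain k σ K (0 + 1) j) := by
      have := hAlev 0
      rwa [unfoldC, kChain_inf k σ J K 0 j] at this
    have h1P : Submodule.map (koszulD k σ) (kChain k σ J 0 j) ≤ (⊥ : Submodule k _) := by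
      rintro _ ⟨c, hc, rfl⟩
      have := kChain_zero_le_ker k σ J j hc
      rw [LinearMap.mem_ker] at this
      rw [this]
      exact Submodule.zero_mem _
    have h1Q : Submodule.map (koszulD k σ) (kChain k σ K 0 j) ≤ (⊥ : Submodule k _) := by
      rintro _ ⟨c, hc, rfl⟩
      have := kChain_zero_le_ker k σ K j hc
      rw [LinearMap.mem_ker] at this
      rw [this]
      exact Submodule.zero_mem _
    have hA0 : (⊥ : Submodule k (Finset σ → MvPolynomial σ k)) ⊓ ⊥ ⊓
        LinearMap.ker (koszulD k σ) ≤
        Submodule.map (koszulD k σ) (kChain k σ J 0 j)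
          ⊓ Submodule.map (koszulD k σ) (kChain k σ K 0 j) :=
      (inf_le_left.trans inf_le_left).trans bot_le
    have emv := mv_six (koszulD k σ) hdd
      (kChain k σ J (0 + 1) j) (kChain k σ J 0 j) ⊥
      (kChain k σ K (0 + 1) j) (kChain k σ K 0 j) ⊥
      (map_koszulD_kChain_le k σ J 0 j) (map_koszulD_kChain_le k σ K 0 j)
      h1P h1Q hA1 hA0
    -- rewrite the I-terms
    rw [unfoldC, kChain_sup k σ hI hJ hK hsum 0 j] at eI
    rw [unfoldC] at eJ eK
    rw [kChain_sup k σ hI hJ hK hsum (0 + 1) j, Submodule.map_sup] at eI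
    -- the two A-terms vanish
    have z1 : Module.finrank k
        ↥(Submodule.map (koszulD k σ) (kChain k σ J 0 j ⊓ kChain k σ K 0 j)) = 0 := by
      have hb : Submodule.map (koszulD k σ) (kChain k σ J 0 j ⊓ kChain k σ K 0 j) = ⊥ := by
        rw [eq_bot_iff]
        rintro _ ⟨c, hc, rfl⟩
        have := kChain_zero_le_ker k σ J j hc.1
        rw [LinearMap.mem_ker] at this
        rw [this]
        exact Submodule.zero_mem _
      rw [hb]
      exact finrank_bot k _
    have z2 : Module.finrank k
        ↥((⊥ : Submodule k (Finset σ → MvPolynomial σ k)) ⊓ ⊥ ⊓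
          LinearMap.ker (koszulD k σ)) = 0 := by
      have hb : (⊥ : Submodule k (Finset σ → MvPolynomial σ k)) ⊓ ⊥ ⊓
          LinearMap.ker (koszulD k σ) = ⊥ := by simp
      rw [hb]
      exact finrank_bot k _
    omega
  · obtain ⟨i', rfl⟩ := Nat.exists_eq_succ_of_ne_zero hi
    rw [if_neg hi, Nat.succ_sub_one]
    simp only [Nat.succ_eq_add_one]
    have eI := bettiNumber_add_eq k σ I (i' + 1) j
    have eJ := bettiNumber_add_eq k σ J (i' + 1) j
    have eK := bettiNumber_add_eq k σ K (i' + 1) j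
    have eA := bettiNumber_add_eq k σ (J ⊓ K) i' j
    have hA1 : kChain k σ J (i' + 1) j ⊓ kChain k σ K (i' + 1) j ⊓
        LinearMap.ker (koszulD k σ) ≤
        Submodule.map (koszulD k σ) (kChain k σ J (i' + 1 + 1) j)
          ⊓ Submodule.map (koszulD k σ) (kChain k σ K (i' + 1 + 1) j) := by
      have := hAlev (i' + 1)
      rwa [unfoldC, kChain_inf k σ J K (i' + 1) j] at this
    have hA0 : kChain k σ J i' j ⊓ kChain k σ K i' j ⊓ LinearMap.ker (koszulD k σ) ≤
        Submodule.map (koszulD k σ) (kChain k σ J (i' + 1) j)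
          ⊓ Submodule.map (koszulD k σ) (kChain k σ K (i' + 1) j) := by
      have := hAlev i'
      rwa [unfoldC, kChain_inf k σ J K i' j] at this
    have emv := mv_six (koszulD k σ) hdd
      (kChain k σ J (i' + 1 + 1) j) (kChain k σ J (i' + 1) j) (kChain k σ J i' j)
      (kChain k σ K (i' + 1 + 1) j) (kChain k σ K (i' + 1) j) (kChain k σ K i' j)
      (map_koszulD_kChain_le k σ J (i' + 1) j) (map_koszulD_kChain_le k σ K (i' + 1) j)
      (map_koszulD_kChain_le k σ J i' j) (map_koszulD_kChain_le k σ K i' j)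
      hA1 hA0
    rw [unfoldC, kChain_sup k σ hI hJ hK hsum (i' + 1) j] at eI
    rw [kChain_sup k σ hI hJ hK hsum (i' + 1 + 1) j, Submodule.map_sup] at eI
    rw [unfoldC] at eJ eK
    rw [unfoldC, kChain_inf k σ J K i' j, kChain_inf k σ J K (i' + 1) j] at eA
    omega

end Aux

/-- if `G(I)` is the disjoint union of `G(J)` and `G(K)` and both `J` and
`K` have linear minimal free resolutions, then `I = J + K` is a Betti splitting. -/
theorem betti_splitting_of_linear_resolutions
    {k : Type*} [Field k] {n : ℕ}
    (I J K : Ideal (MvPolynomial (Fin n) k))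
    (hI : IsMonomialIdeal k (Fin n) I) (hJ : IsMonomialIdeal k (Fin n) J)
    (hK : IsMonomialIdeal k (Fin n) K)
    (hsum : I = J + K)
    (hgens : minGens k (Fin n) I = minGens k (Fin n) J ∪ minGens k (Fin n) K)
    (hdisj : Disjoint (minGens k (Fin n) J) (minGens k (Fin n) K))
    (hlinJ : HasLinearResolution k (Fin n) J)
    (hlinK : HasLinearResolution k (Fin n) K) :
    ∀ (i j : ℕ),
      bettiNumberGr k (Fin n) I i j =
        bettiNumberGr k (Fin n) J i j + bettiNumberGr k (Fin n) K i j +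
          (if i = 0 then 0 else bettiNumberGr k (Fin n) (J ⊓ K) (i - 1) j) := by
  intro i q
  have hfin := setOf_sum_eq_finite (σ := Fin n) q
  have per : ∀ j : Fin n →₀ ℕ,
      bettiNumber k (Fin n) I i j = bettiNumber k (Fin n) J i j + bettiNumber k (Fin n) K i j +
        (if i = 0 then 0 else bettiNumber k (Fin n) (J ⊓ K) (i - 1) j) :=
    fun j => betti_split_multidegree k (Fin n) hI hJ hK hsum hgens hdisj hlinJ hlinK i j
  by_cases hi : i = 0
  · rw [if_pos hi, add_zero]
    unfold bettiNumberGr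
    rw [← hfin.coe_toFinset, finsum_mem_coe_finset, finsum_mem_coe_finset,
      finsum_mem_coe_finset, ← Finset.sum_add_distrib]
    refine Finset.sum_congr rfl fun j _ => ?_
    have hp := per j
    rw [if_pos hi, add_zero] at hp
    exact hp
  · rw [if_neg hi]
    unfold bettiNumberGr
    rw [← hfin.coe_toFinset, finsum_mem_coe_finset, finsum_mem_coe_finset,
      finsum_mem_coe_finset, finsum_mem_coe_finset,
      ← Finset.sum_add_distrib, ← Finset.sum_add_distrib]
    refine Finset.sum_congr rfl fun j _ => ?_
    have hp := per j
    rw [if_neg hi] at hp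
    exact hp
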